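/- Let N ≥ 2 and let f₁, …, f_N : [0,1] → [0,1] be strictly monotone functions such that f_n((0,1)) ∩ f_m((0,1)) = ∅ for all n ≠ m, ⋃_{n=1}^N f_n([0,1]) = [0,1], and each f_n satisfies Luzin's condition N (f_n maps Lebesgue-null sets to Lebesgue-null sets). Define S : [0,1] → [0,1] by S(x) = f_n⁻¹(x) for x ∈ f_n((0,1)) (n = 1, …, N) and S(x) = 0 for x ∉ ⋃_{n=1}^N f_n((0,1)). Then S is nonsingular with respect to Lebesgue measure: for every Borel set A ⊆ [0,1] with Lebesgue measure zero, S⁻¹(A) has Lebesgue measure zero. -/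
import Mathlib


open MeasureTheory Filter Topology

/-- Let `N ≥ 2` and let `f₁, …, f_N : [0,1] → [0,1]` be strictly monotone
functions with `f_n((0,1)) ∩ f_m((0,1)) = ∅` for `n ≠ m`, `⋃ f_n([0,1]) = [0,1]`, each
satisfying Luzin's condition N. Let `S : [0,1] → [0,1]` be defined by `S(x) = f_n⁻¹(x)`
for `x ∈ f_n((0,1))` and `S(x) = 0` otherwise. Then `S` is nonsingular with respect to
Lebesgue measure: `S⁻¹(A)` is Lebesgue-null for every Borel-null `A ⊆ [0,1]`. -/
theorem stmt3 (N : ℕ) (hN : 2 ≤ N) (f : Fin N → ℝ → ℝ)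
    (hmaps : ∀ n, Set.MapsTo (f n) (Set.Icc 0 1) (Set.Icc 0 1))
    (hmono : ∀ n, StrictMonoOn (f n) (Set.Icc 0 1) ∨ StrictAntiOn (f n) (Set.Icc 0 1))
    (hdisj : ∀ n m, n ≠ m →
      Disjoint (f n '' Set.Ioo 0 1) (f m '' Set.Ioo 0 1))
    (hcover : (⋃ n, f n '' Set.Icc 0 1) = Set.Icc 0 1)
    (hLuzin : ∀ n, ∀ A : Set ℝ, A ⊆ Set.Icc 0 1 → volume A = 0 → volume (f n '' A) = 0)
    (S : ℝ → ℝ) (hSmeas : Measurable S)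
    (hSmaps : Set.MapsTo S (Set.Icc 0 1) (Set.Icc 0 1))
    (hSf : ∀ n, ∀ x ∈ Set.Ioo (0 : ℝ) 1, S (f n x) = x)
    (hS0 : ∀ y ∈ Set.Icc (0 : ℝ) 1, y ∉ (⋃ n, f n '' Set.Ioo 0 1) → S y = 0) :
    ∀ A : Set ℝ, MeasurableSet A → A ⊆ Set.Icc 0 1 → volume A = 0 →
      volume (S ⁻¹' A ∩ Set.Icc 0 1) = 0 := by
  intro A hAm hAsub hA0
  have key : S ⁻¹' A ∩ Set.Icc 0 1 ⊆
      (⋃ n, f n '' (A ∩ Set.Ioo 0 1)) ∪ ⋃ n, f n '' ({0, 1} : Set ℝ) := by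
    rintro y ⟨hyA, hyI⟩
    by_cases hmem : y ∈ ⋃ n, f n '' Set.Ioo 0 1
    · obtain ⟨_, ⟨n, rfl⟩, x, hx, rfl⟩ := hmem
      left
      exact Set.mem_iUnion.2 ⟨n, ⟨x, ⟨by simpa [Set.mem_preimage, hSf n x hx] using hyA, hx⟩, rfl⟩⟩
    · right
      have : y ∈ ⋃ n, f n '' Set.Icc 0 1 := by rw [hcover]; exact hyI
      obtain ⟨_, ⟨n, rfl⟩, x, hx, rfl⟩ := this
      refine Set.mem_iUnion.2 ⟨n, ⟨x, ?_, rfl⟩⟩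
      by_contra hx01
      simp only [Set.mem_insert_iff, Set.mem_singleton_iff] at hx01
      push_neg at hx01
      have hxIoo : x ∈ Set.Ioo (0:ℝ) 1 :=
        ⟨lt_of_le_of_ne hx.1 (Ne.symm hx01.1), lt_of_le_of_ne hx.2 hx01.2⟩
      exact hmem (Set.mem_iUnion.2 ⟨n, x, hxIoo, rfl⟩)
  refine measure_mono_null key (measure_union_null ?_ ?_)
  · refine measure_iUnion_null fun n => hLuzin n _ ?_ ?_
    · exact fun x hx => hAsub hx.1
    · exact measure_mono_null Set.inter_subset_left hA0
  · refine measure_iUnion_null fun n => ?_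
    have : (f n '' ({0, 1} : Set ℝ)).Finite := (Set.toFinite _).image _
    exact this.measure_zero _
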